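/- Let P(x) ∈ F_q[x] be a univariate polynomial of degree d with 1 ≤ d ≤ q−1. Suppose there exists a polynomial Q(x) ∈ F_q[x] with deg(Q) < q − d such that x^{q−d}·P(x) ≡ Q(x)·P(x) modulo the ideal (x^q − x). Then P(x) has exactly d distinct roots in F_q. -/

import Mathlib

open Polynomial

/-- Let `P ∈ F_q[x]` be of degree `d` with `1 ≤ d ≤ q−1`. If there is a
polynomial `Q` with `deg Q < q − d` such that `x^{q−d}·P ≡ Q·P (mod (x^q − x))`, then
`P` has exactly `d` distinct roots in `F_q`. -/
theorem stmt_13 {F : Type*} [Field F] [Fintype F] (P Q : Polynomial F) (d : ℕ)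
    (hd1 : 1 ≤ d) (hd2 : d ≤ Fintype.card F - 1)
    (hP : P.natDegree = d)
    (hQ : Q.natDegree < Fintype.card F - d)
    (hmod : Polynomial.X ^ (Fintype.card F - d) * P - Q * P ∈
      Ideal.span {Polynomial.X ^ Fintype.card F - Polynomial.X}) :
    Nat.card {a : F // Polynomial.eval a P = 0} = d := by
  classical
  set q := Fintype.card F with hq
  have hq2 : 2 ≤ q := Fintype.one_lt_card
  have hdq : d < q := lt_of_le_of_lt hd2 (Nat.sub_lt (by omega) one_pos)
  have hqd1 : 1 ≤ q - d := by omega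
  set S : Polynomial F := X ^ q - X with hS
  have hSdeg : S.natDegree = q := FiniteField.X_pow_card_sub_X_natDegree_eq F hq2
  have hSne : S ≠ 0 := fun h => by simp [h] at hSdeg; omega
  have hPne : P ≠ 0 := fun h => by simp [h] at hP; omega
  -- the factor X^(q-d) - Q
  set A : Polynomial F := X ^ (q - d) - Q with hA
  have hAdeg : A.natDegree = q - d := by
    have : (X ^ (q - d) : Polynomial F).natDegree = q - d := natDegree_X_pow _
    rw [hA, natDegree_sub_eq_left_of_natDegree_lt (by rwa [this]), this]
  have hAne : A ≠ 0 := fun h => by simp [h] at hAdeg; omega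
  -- get R with A * P = S * R
  obtain ⟨R, hR⟩ := Ideal.mem_span_singleton'.mp hmod
  have hAP : A * P = R * S := by rw [hA, sub_mul, hR]
  have hRne : R ≠ 0 := by
    intro h
    rw [h, zero_mul] at hAP
    exact (mul_ne_zero hAne hPne) hAP
  have hRdeg : R.natDegree = 0 := by
    have h1 : (A * P).natDegree = q := by
      rw [natDegree_mul hAne hPne, hAdeg, hP]; omega
    have h2 : (R * S).natDegree = R.natDegree + q := by
      rw [natDegree_mul hRne hSne, hSdeg]
    rw [hAP] at h1
    omega
  -- P divides S
  have hPdvd : P ∣ S := by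
    obtain ⟨c, hc⟩ := natDegree_eq_zero.mp hRdeg
    have hcne : c ≠ 0 := fun h => by simp [h] at hc; exact hRne hc.symm
    refine ⟨C c⁻¹ * A, ?_⟩
    have h : A * P = C c * S := by rw [hAP, ← hc]
    calc S = C c⁻¹ * (C c * S) := by
            rw [← mul_assoc, ← C_mul, inv_mul_cancel₀ hcne, C_1, one_mul]
      _ = C c⁻¹ * (A * P) := by rw [h]
      _ = P * (C c⁻¹ * A) := by ring
  -- roots of S
  have hSroots : S.roots = Finset.univ.val := FiniteField.roots_X_pow_card_sub_X F
  have hle : P.roots ≤ S.roots := roots.le_of_dvd hSne hPdvd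
  have hnodup : P.roots.Nodup := by
    have hSn : S.roots.Nodup := by rw [hSroots]; exact Finset.univ.nodup
    exact Multiset.nodup_of_le hle hSn
  -- P splits, so card roots = d
  have hScard : Multiset.card S.roots = q := by
    rw [hSroots]; simp [hq]
  have hSsplits : Splits S := (splits_iff_card_roots).mpr (by rw [hScard, hSdeg])
  have hPsplits : Splits P :=
    Splits.of_dvd hSsplits hSne hPdvd
  have hPcard : Multiset.card P.roots = d := by
    rw [← hP]; exact (splits_iff_card_roots).mp hPsplits
  -- finish
  calc Nat.card {a : F // Polynomial.eval a P = 0}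
      = Nat.card {a : F // a ∈ P.roots.toFinset} :=
        Nat.card_congr (Equiv.subtypeEquivRight fun a => by
          simp [mem_roots, hPne, IsRoot])
    _ = P.roots.toFinset.card := by
        rw [Nat.card_eq_fintype_card, Fintype.card_coe]
    _ = Multiset.card P.roots := Multiset.toFinset_card_of_nodup hnodup
    _ = d := hPcard
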